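/- Let α ∈ (1,2]. Then there exists a function f belonging to Co(α) whose Taylor coefficients satisfy |a₃ − (2/3)·a₂²| = α/3; that is, the bound α/3 in the Fekete–Szegő inequality for Co(α) at λ = 2/3 is sharp. -/

import Mathlib

open Complex Metric

noncomputable section

/-- The open unit disk in ℂ. -/
def unitDisk : Set ℂ := ball 0 1

/-- φ is a (normalized) starlike univalent function on the unit disk. -/
def IsStarlike (φ : ℂ → ℂ) : Prop :=
  DifferentiableOn ℂ φ unitDisk ∧ φ 0 = 0 ∧ deriv φ 0 = 1 ∧
    (∀ z ∈ unitDisk, z ≠ 0 → φ z ≠ 0) ∧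
    ∀ z ∈ unitDisk, 0 < (z * deriv φ z / φ z).re

/-- The function P_f from the analytic characterization of Co(α). -/
def Pfun (α : ℝ) (f : ℂ → ℂ) (z : ℂ) : ℂ :=
  (2 / ((α : ℂ) - 1)) *
    (((α : ℂ) + 1) / 2 * ((1 + z) / (1 - z)) - 1 - z * deriv (deriv f) z / deriv f z)

/-- f belongs to the class Co(α) of concave univalent functions. -/
def IsConcaveUnivalent (α : ℝ) (f : ℂ → ℂ) : Prop :=
  DifferentiableOn ℂ f unitDisk ∧ f 0 = 0 ∧ deriv f 0 = 1 ∧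
    (∀ z ∈ unitDisk, deriv f z ≠ 0) ∧
    ∀ z ∈ unitDisk, 0 < (Pfun α f z).re


def gsharp (z : ℂ) : ℂ := (1 - I*z)/(1 - z)

def usub (z : ℂ) : ℂ := (1 - z)⁻¹

def fsharp (α : ℝ) (z : ℂ) : ℂ := ((gsharp z) ^ (α:ℂ) - 1) / ((α:ℂ) * (1 - I))

def Fd1 (α : ℝ) (z : ℂ) : ℂ := gsharp z ^ ((α:ℂ)-1) * usub z^2

def Fd2 (α : ℝ) (z : ℂ) : ℂ :=
  ((α:ℂ)-1)*(1-I)*gsharp z ^ ((α:ℂ)-2)*usub z^4 + 2*gsharp z ^ ((α:ℂ)-1)*usub z^3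

def Fd3 (α : ℝ) (z : ℂ) : ℂ :=
  ((α:ℂ)-1)*(1-I)*(((α:ℂ)-2)*(1-I)*gsharp z ^ ((α:ℂ)-3)*usub z^6
      + 4*gsharp z ^ ((α:ℂ)-2)*usub z^5)
    + 2*(((α:ℂ)-1)*(1-I)*gsharp z ^ ((α:ℂ)-2)*usub z^5 + 3*gsharp z ^ ((α:ℂ)-1)*usub z^4)

lemma one_sub_ne {z : ℂ} (hz : ‖z‖ < 1) : (1:ℂ) - z ≠ 0 := by
  intro h
  have hz1 : z = 1 := by linear_combination -h
  rw [hz1] at hz; simp at hz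

lemma one_sub_I_ne {z : ℂ} (hz : ‖z‖ < 1) : (1:ℂ) - I*z ≠ 0 := by
  intro h
  have h1 : I * z = 1 := by linear_combination -h
  have := congrArg norm h1
  simp [norm_mul] at this
  linarith

lemma one_sub_I_ne' : (1:ℂ) - I ≠ 0 := by
  intro h
  have := congrArg Complex.im h
  simp at this

lemma gsharp_ne {z : ℂ} (hz : ‖z‖ < 1) : gsharp z ≠ 0 :=
  div_ne_zero (one_sub_I_ne hz) (one_sub_ne hz)

lemma usub_ne {z : ℂ} (hz : ‖z‖ < 1) : usub z ≠ 0 :=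
  inv_ne_zero (one_sub_ne hz)

lemma gsharp_cpow_ne {z : ℂ} (hz : ‖z‖ < 1) (c : ℂ) : gsharp z ^ c ≠ 0 := by
  intro h
  exact gsharp_ne hz ((Complex.cpow_eq_zero_iff _ _).mp h).1

lemma normSq_lt_one {z : ℂ} (hz : ‖z‖ < 1) : Complex.normSq z < 1 := by
  rw [← Complex.sq_norm]
  nlinarith [norm_nonneg z]

lemma gsharp_slit {z : ℂ} (hz : ‖z‖ < 1) : gsharp z ∈ Complex.slitPlane := by
  have key : (gsharp z).re - (gsharp z).im
      = (1 - Complex.normSq z)/Complex.normSq (1-z) := by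
    simp only [gsharp, Complex.div_re, Complex.div_im, Complex.normSq_apply,
      Complex.sub_re, Complex.sub_im, Complex.mul_re, Complex.mul_im,
      Complex.one_re, Complex.one_im, Complex.I_re, Complex.I_im]
    ring
  have hd : 0 < Complex.normSq (1-z) := Complex.normSq_pos.mpr (one_sub_ne hz)
  have hpos : 0 < (gsharp z).re - (gsharp z).im := by
    rw [key]
    exact div_pos (by linarith [normSq_lt_one hz]) hd
  rw [Complex.mem_slitPlane_iff]
  by_cases him : (gsharp z).im = 0
  · left; rw [him] at hpos; linarith
  · right; exact him

lemma cpow_red1 (α : ℝ) {z : ℂ} (hz : ‖z‖ < 1) :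
    gsharp z ^ ((α:ℂ)-2) = gsharp z ^ ((α:ℂ)-1) / gsharp z := by
  rw [show (α:ℂ)-2 = ((α:ℂ)-1) - 1 by ring, Complex.cpow_sub _ _ (gsharp_ne hz),
    Complex.cpow_one]

lemma cpow_red2 (α : ℝ) {z : ℂ} (hz : ‖z‖ < 1) :
    gsharp z ^ ((α:ℂ)-3) = gsharp z ^ ((α:ℂ)-1) / (gsharp z * gsharp z) := by
  rw [show (α:ℂ)-3 = (((α:ℂ)-1) - 1) - 1 by ring, Complex.cpow_sub _ _ (gsharp_ne hz),
    Complex.cpow_sub _ _ (gsharp_ne hz), Complex.cpow_one, div_div]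

lemma hasDerivAt_usub {z : ℂ} (hz : ‖z‖ < 1) :
    HasDerivAt usub (usub z^2) z := by
  have hden : HasDerivAt (fun z : ℂ => 1 - z) (-1) z := by
    simpa using (hasDerivAt_id z).const_sub 1
  have := hden.inv (one_sub_ne hz)
  refine this.congr_deriv ?_
  unfold usub
  field_simp

lemma hasDerivAt_gsharp {z : ℂ} (hz : ‖z‖ < 1) :
    HasDerivAt gsharp ((1-I) * usub z^2) z := by
  have hnum : HasDerivAt (fun z : ℂ => 1 - I*z) (-I) z := by
    simpa using ((hasDerivAt_id z).const_mul I).const_sub 1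
  have hden : HasDerivAt (fun z : ℂ => 1 - z) (-1) z := by
    simpa using (hasDerivAt_id z).const_sub 1
  have := hnum.div hden (one_sub_ne hz)
  refine this.congr_deriv ?_
  unfold usub
  field_simp [one_sub_ne hz]
  ring

lemma hasDerivAt_fsharp (α : ℝ) (hα1 : 1 < α) {z : ℂ} (hz : ‖z‖ < 1) :
    HasDerivAt (fsharp α) (Fd1 α z) z := by
  have hA : (α:ℂ) ≠ 0 := Complex.ofReal_ne_zero.mpr (by linarith)
  have h := ((((hasDerivAt_gsharp hz).cpow_const (c := (α:ℂ))
    (gsharp_slit hz))).sub_const 1).div_const ((α:ℂ) * (1 - I))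
  refine h.congr_deriv ?_
  unfold Fd1
  rw [show (α:ℂ)-1 = (α:ℂ)-1 from rfl]
  field_simp [hA, one_sub_I_ne']

lemma hasDerivAt_Fd1 (α : ℝ) {z : ℂ} (hz : ‖z‖ < 1) :
    HasDerivAt (Fd1 α) (Fd2 α z) z := by
  have h1 : HasDerivAt (fun z => gsharp z ^ ((α:ℂ)-1))
      (((α:ℂ)-1) * gsharp z ^ ((α:ℂ)-1-1) * ((1-I) * usub z^2)) z :=
    (hasDerivAt_gsharp hz).cpow_const (gsharp_slit hz)
  have h2 : HasDerivAt (fun z => usub z^2) (2 * usub z^1 * (usub z^2)) z :=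
    (hasDerivAt_usub hz).pow 2
  have h := h1.mul h2
  refine h.congr_deriv ?_
  unfold Fd2
  rw [show (α:ℂ)-1-1 = (α:ℂ)-2 by ring, cpow_red1 α hz]
  field_simp [gsharp_ne hz]

lemma hasDerivAt_Fd2 (α : ℝ) {z : ℂ} (hz : ‖z‖ < 1) :
    HasDerivAt (Fd2 α) (Fd3 α z) z := by
  have hg := hasDerivAt_gsharp hz
  have h1 : HasDerivAt (fun z => gsharp z ^ ((α:ℂ)-2))
      (((α:ℂ)-2) * gsharp z ^ ((α:ℂ)-2-1) * ((1-I) * usub z^2)) z :=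
    hg.cpow_const (gsharp_slit hz)
  have h2 : HasDerivAt (fun z => gsharp z ^ ((α:ℂ)-1))
      (((α:ℂ)-1) * gsharp z ^ ((α:ℂ)-1-1) * ((1-I) * usub z^2)) z :=
    hg.cpow_const (gsharp_slit hz)
  have h4 : HasDerivAt (fun z => usub z^4) (4 * usub z^3 * (usub z^2)) z :=
    (hasDerivAt_usub hz).pow 4
  have h3 : HasDerivAt (fun z => usub z^3) (3 * usub z^2 * (usub z^2)) z :=
    (hasDerivAt_usub hz).pow 3
  have hq1 := (h1.const_mul (((α:ℂ)-1)*(1-I))).mul h4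
  have hq2 := (h2.const_mul (2:ℂ)).mul h3
  have h := hq1.add hq2
  refine h.congr_deriv ?_
  unfold Fd3
  rw [show (α:ℂ)-2-1 = (α:ℂ)-3 by ring, show (α:ℂ)-1-1 = (α:ℂ)-2 by ring,
    cpow_red2 α hz, cpow_red1 α hz]
  field_simp [gsharp_ne hz]

lemma mem_ball_abs {z : ℂ} : z ∈ ball (0:ℂ) 1 ↔ ‖z‖ < 1 := by
  rw [mem_ball_zero_iff]

lemma deriv_fsharp (α : ℝ) (hα1 : 1 < α) {z : ℂ} (hz : ‖z‖ < 1) :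
    deriv (fsharp α) z = Fd1 α z :=
  (hasDerivAt_fsharp α hα1 hz).deriv

lemma deriv2_fsharp (α : ℝ) (hα1 : 1 < α) {z : ℂ} (hz : ‖z‖ < 1) :
    deriv (deriv (fsharp α)) z = Fd2 α z := by
  have hev : deriv (fsharp α) =ᶠ[nhds z] Fd1 α := by
    filter_upwards [isOpen_ball.mem_nhds (mem_ball_abs.mpr hz)] with w hw
    exact deriv_fsharp α hα1 (mem_ball_abs.mp hw)
  rw [hev.deriv_eq]
  exact (hasDerivAt_Fd1 α hz).deriv

lemma deriv3_fsharp (α : ℝ) (hα1 : 1 < α) {z : ℂ} (hz : ‖z‖ < 1) :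
    deriv (deriv (deriv (fsharp α))) z = Fd3 α z := by
  have hev : deriv (deriv (fsharp α)) =ᶠ[nhds z] Fd2 α := by
    filter_upwards [isOpen_ball.mem_nhds (mem_ball_abs.mpr hz)] with w hw
    exact deriv2_fsharp α hα1 (mem_ball_abs.mp hw)
  rw [hev.deriv_eq]
  exact (hasDerivAt_Fd2 α hz).deriv

lemma pfun_eq (α : ℝ) (hα1 : 1 < α) {z : ℂ} (hz : ‖z‖ < 1) :
    (2 / ((α : ℂ) - 1)) * (((α : ℂ) + 1) / 2 * ((1 + z) / (1 - z)) - 1 -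
      z * deriv (deriv (fsharp α)) z / deriv (fsharp α) z) = (1 + I*z)/(1 - I*z) := by
  rw [deriv2_fsharp α hα1 hz, deriv_fsharp α hα1 hz]
  have hA1 : (α:ℂ) - 1 ≠ 0 := by
    rw [show ((α:ℂ)-1) = ((α-1:ℝ):ℂ) by push_cast; ring]
    exact Complex.ofReal_ne_zero.mpr (by linarith)
  have hG : gsharp z ^ ((α:ℂ)-1) ≠ 0 := gsharp_cpow_ne hz _
  have hFd1 : Fd1 α z ≠ 0 := mul_ne_zero hG (pow_ne_zero _ (usub_ne hz))
  set Q : ℂ := ((α:ℂ)-1)*(1-I)*usub z^2 / gsharp z + 2*usub z with hQdef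
  have hQ : Fd2 α z = Fd1 α z * Q := by
    rw [hQdef]; unfold Fd1 Fd2
    rw [cpow_red1 α hz]
    field_simp [gsharp_ne hz]
  have hQ3 : Q = ((α:ℂ)-1)*(1-I) * ((1-z)*(1-I*z))⁻¹ + 2*(1-z)⁻¹ := by
    rw [hQdef]; unfold gsharp usub
    field_simp [one_sub_ne hz, one_sub_I_ne hz]
  rw [hQ, mul_div_assoc, mul_div_cancel_left₀ _ hFd1, hQ3]
  have h1 := one_sub_ne hz
  have h2 := one_sub_I_ne hz
  have step1 : (2/((α:ℂ)-1)) * (((α:ℂ)+1)/2*((1+z)/(1-z)) - 1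
      - z*(((α:ℂ)-1)*(1-I)*((1-z)*(1-I*z))⁻¹ + 2*(1-z)⁻¹))
      = (2/((α:ℂ)-1)) * (((α:ℂ)+1)/2*((1+z)/(1-z)) - 1 - 2*z*(1-z)⁻¹)
        - 2*(1-I)*z*((1-z)*(1-I*z))⁻¹ := by
    field_simp
    ring
  have step2 : (2/((α:ℂ)-1)) * (((α:ℂ)+1)/2*((1+z)/(1-z)) - 1 - 2*z*(1-z)⁻¹)
      = (1+z)/(1-z) := by
    field_simp
    ring
  rw [step1, step2]
  rw [← div_eq_mul_inv, div_sub_div _ _ h1 (mul_ne_zero h1 h2), div_eq_div_iff (mul_ne_zero h1 (mul_ne_zero h1 h2)) h2]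
  linear_combination (z*(1-z)*(1-z)*(1 - I*z) + (-z+2*z^2+z^2*I-z^3-2*z^3*I+z^4*I)) * I_sq

lemma re_pos_target {z : ℂ} (hz : ‖z‖ < 1) :
    0 < ((1 + I*z)/(1 - I*z)).re := by
  have key : ((1 + I*z)/(1 - I*z)).re
      = (1 - Complex.normSq z)/Complex.normSq (1 - I*z) := by
    rw [Complex.div_re, ← add_div]
    congr 1
    simp only [Complex.normSq_apply, Complex.add_re, Complex.add_im, Complex.sub_re,
      Complex.sub_im, Complex.mul_re, Complex.mul_im, Complex.one_re, Complex.one_im,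
      Complex.I_re, Complex.I_im]
    ring
  rw [key]
  exact div_pos (by linarith [normSq_lt_one hz])
    (Complex.normSq_pos.mpr (one_sub_I_ne hz))

lemma Fd2_zero (α : ℝ) : Fd2 α 0 = ((α:ℂ)-1)*(1-I) + 2 := by
  simp [Fd2, gsharp, usub, Complex.one_cpow]

lemma Fd3_zero (α : ℝ) :
    Fd3 α 0 = ((α:ℂ)-1)*(1-I)*(((α:ℂ)-2)*(1-I) + 4) + 2*(((α:ℂ)-1)*(1-I) + 3) := by
  simp [Fd3, gsharp, usub, Complex.one_cpow]

theorem stmt12 (α : ℝ) (hα : 1 < α ∧ α ≤ 2) :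
    ∃ f : ℂ → ℂ, IsConcaveUnivalent α f ∧
      ‖iteratedDeriv 3 f 0 / 6 - (2 / 3 : ℂ) * (iteratedDeriv 2 f 0 / 2) ^ 2‖
        = α / 3 := by
  obtain ⟨hα1, hα2⟩ := hα
  have hmem : ∀ z : ℂ, z ∈ unitDisk → ‖z‖ < 1 := by
    intro z hz
    exact mem_ball_abs.mp hz
  refine ⟨fsharp α, ⟨?_, ?_, ?_, ?_, ?_⟩, ?_⟩
  · intro z hz
    exact ((hasDerivAt_fsharp α hα1 (hmem z hz)).differentiableAt).differentiableWithinAt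
  · simp [fsharp, gsharp]
  · rw [deriv_fsharp α hα1 (by simp)]
    simp [Fd1, gsharp, usub]
  · intro z hz
    rw [deriv_fsharp α hα1 (hmem z hz)]
    exact mul_ne_zero (gsharp_cpow_ne (hmem z hz) _) (pow_ne_zero _ (usub_ne (hmem z hz)))
  · intro z hz
    unfold Pfun
    rw [pfun_eq α hα1 (hmem z hz)]
    exact re_pos_target (hmem z hz)
  · have h2 : iteratedDeriv 2 (fsharp α) 0 = Fd2 α 0 := by
      simp only [iteratedDeriv_succ, iteratedDeriv_zero]
      exact deriv2_fsharp α hα1 (by simp)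
    have h3 : iteratedDeriv 3 (fsharp α) 0 = Fd3 α 0 := by
      simp only [iteratedDeriv_succ, iteratedDeriv_zero]
      exact deriv3_fsharp α hα1 (by simp)
    rw [h2, h3, Fd2_zero, Fd3_zero]
    have hval : (((α:ℂ)-1)*(1-I)*(((α:ℂ)-2)*(1-I) + 4) + 2*(((α:ℂ)-1)*(1-I) + 3))/6
        - (2/3:ℂ) * ((((α:ℂ)-1)*(1-I) + 2)/2)^2 = (α:ℂ)/3 := by
      linear_combination ((1 - (α:ℂ))/6) * Complex.I_sq
    rw [hval, show ((α:ℂ))/3 = ((α/3:ℝ):ℂ) by push_cast; ring, Complex.norm_real, Real.norm_eq_abs,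
      abs_of_pos (by linarith)]
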